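/- Let q be a prime power with q ≡ 1 (mod 4), α a generator of F_q^×, and define v_i = Σ_{j=0}^{i} α^j for i ∈ {0,...,q−2}. Then v_0, v_1, ..., v_{q−2} are pairwise distinct, the sequence (v_0,...,v_{q−2}) forms an alternating cycle in K̄_q, and the unique element of F_q not among the v_i is u = −(α−1)^{-1}. -/

import Mathlib

open Finset

/-- The difference `d` is "red": an odd power of the generator `α`. -/
def IsRed {F : Type} [Field F] (α : Fˣ) (d : F) : Prop :=
  ∃ z : ℤ, Odd z ∧ ((α ^ z : Fˣ) : F) = d

/-- The difference `d` is "blue": an even power of the generator `α`. -/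
def IsBlue {F : Type} [Field F] (α : Fˣ) (d : F) : Prop :=
  ∃ z : ℤ, Even z ∧ ((α ^ z : Fˣ) : F) = d

lemma red_iff {F : Type} [Field F] (α : Fˣ) (heven : 2 ∣ orderOf α) (hpos : 0 < orderOf α)
    (n : ℕ) : IsRed α ((α : F) ^ n) ↔ Odd n := by
  constructor
  · rintro ⟨z, hz, he⟩
    have h3 : α ^ z = α ^ (n : ℤ) := Units.ext (by rw [he]; norm_cast)
    have h4 : z ≡ (n : ℤ) [ZMOD (orderOf α)] := zpow_eq_zpow_iff_modEq.mp h3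
    have h5 : (orderOf α : ℤ) ∣ (n : ℤ) - z := Int.ModEq.dvd h4
    have h6 : (2 : ℤ) ∣ (n : ℤ) - z := dvd_trans (by exact_mod_cast heven) h5
    have hz2 : z % 2 = 1 := Int.odd_iff.mp hz
    have : (n : ℤ) % 2 = 1 := by omega
    exact Nat.odd_iff.mpr (by omega)
  · intro hn
    exact ⟨(n : ℤ), by exact_mod_cast hn, by norm_cast⟩

theorem alternating_cycle (q : ℕ) (hq4 : q % 4 = 1)
    (F : Type) [Field F] [Fintype F] (hq : Fintype.card F = q)
    (α : Fˣ) (hα : ∀ x : Fˣ, x ∈ Subgroup.zpowers α) :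
    (∀ i j : ℕ, i < q - 1 → j < q - 1 →
      (∑ t ∈ Finset.range (i + 1), (α : F) ^ t) =
        (∑ t ∈ Finset.range (j + 1), (α : F) ^ t) → i = j) ∧
    (∀ i : ℕ,
      (IsRed α ((∑ t ∈ Finset.range (i + 2), (α : F) ^ t) -
          (∑ t ∈ Finset.range (i + 1), (α : F) ^ t)) ↔
        ¬ IsRed α ((∑ t ∈ Finset.range (i + 3), (α : F) ^ t) -
          (∑ t ∈ Finset.range (i + 2), (α : F) ^ t)))) ∧
    (∀ x : F, (∀ i : ℕ, i < q - 1 → (∑ t ∈ Finset.range (i + 1), (α : F) ^ t) ≠ x) ↔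
      x = -((α : F) - 1)⁻¹) := by
  classical
  have horder : orderOf α = q - 1 := by
    rw [orderOf_eq_card_of_forall_mem_zpowers hα, Nat.card_eq_fintype_card,
      Fintype.card_units, hq]
  have hq2 : 2 ≤ q := by rw [← hq]; exact Fintype.one_lt_card
  have hq5 : 5 ≤ q := by omega
  have heven : 2 ∣ orderOf α := by rw [horder]; omega
  have hpos : 0 < orderOf α := by omega
  have hα1 : (α : F) ≠ 1 := by
    intro h
    have : α = 1 := Units.ext h
    rw [this, orderOf_one] at horder; omega
  have hd : (α : F) - 1 ≠ 0 := sub_ne_zero.mpr hα1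
  have hv : ∀ n : ℕ, (∑ t ∈ Finset.range n, (α : F) ^ t) = ((α : F) ^ n - 1) / ((α : F) - 1) :=
    fun n => geom_sum_eq hα1 n
  refine ⟨?_, ?_, ?_⟩
  · intro i j hi hj hij
    rw [hv, hv, div_eq_div_iff hd hd] at hij
    have h1 : (α : F) ^ (i + 1) = (α : F) ^ (j + 1) := by
      field_simp at hij
      linear_combination hij
    have h2 : α ^ (i + 1) = α ^ (j + 1) := Units.ext (by push_cast; exact h1)
    have h3 : (i + 1) ≡ (j + 1) [MOD orderOf α] := pow_eq_pow_iff_modEq.mp h2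
    have h4 : (i + 1) % (q - 1) = (j + 1) % (q - 1) := by rwa [horder] at h3
    rcases Nat.lt_or_ge (i + 1) (q - 1) with hi1 | hi1
    · rcases Nat.lt_or_ge (j + 1) (q - 1) with hj1 | hj1
      · rw [Nat.mod_eq_of_lt hi1, Nat.mod_eq_of_lt hj1] at h4; omega
      · have hj2 : j + 1 = q - 1 := by omega
        rw [Nat.mod_eq_of_lt hi1, hj2, Nat.mod_self] at h4; omega
    · have hi2 : i + 1 = q - 1 := by omega
      rcases Nat.lt_or_ge (j + 1) (q - 1) with hj1 | hj1
      · rw [hi2, Nat.mod_self, Nat.mod_eq_of_lt hj1] at h4; omega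
      · omega
  · intro i
    have hdiff : ∀ k : ℕ, (∑ t ∈ Finset.range (k + 1), (α : F) ^ t) -
        (∑ t ∈ Finset.range k, (α : F) ^ t) = (α : F) ^ k := by
      intro k; rw [Finset.sum_range_succ]; ring
    have e1 : (∑ t ∈ Finset.range (i + 2), (α : F) ^ t) -
        (∑ t ∈ Finset.range (i + 1), (α : F) ^ t) = (α : F) ^ (i + 1) := hdiff (i + 1)
    have e2 : (∑ t ∈ Finset.range (i + 3), (α : F) ^ t) -
        (∑ t ∈ Finset.range (i + 2), (α : F) ^ t) = (α : F) ^ (i + 2) := hdiff (i + 2)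
    rw [e1, e2, red_iff α heven hpos, red_iff α heven hpos]
    simp [Nat.odd_iff]
    omega
  · intro x
    constructor
    · intro h
      by_contra hx
      -- x ≠ -(α-1)⁻¹, find i with v_i = x
      have hy0 : x * ((α : F) - 1) + 1 ≠ 0 := by
        intro h0
        apply hx
        field_simp
        linear_combination h0
      obtain ⟨n, hn⟩ : ∃ n : ℕ, α ^ n = Units.mk0 _ hy0 := by
        have h1 := (mem_powers_iff_mem_zpowers).mpr (hα (Units.mk0 _ hy0))
        exact h1
      set k := n % (q - 1) with hk
      have hk1 : k < q - 1 := Nat.mod_lt _ (by omega)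
      have hαk : α ^ k = Units.mk0 _ hy0 := by
        rw [hk, ← horder, pow_mod_orderOf, hn]
      set i := if k = 0 then q - 2 else k - 1 with hi
      have hilt : i < q - 1 := by
        rcases Nat.eq_zero_or_pos k with h0 | h0
        · simp [hi, h0]; omega
        · simp [hi, Nat.pos_iff_ne_zero.mp h0]; omega
      have hαi : (α : F) ^ (i + 1) = x * ((α : F) - 1) + 1 := by
        rcases Nat.eq_zero_or_pos k with h0 | h0
        · have : i + 1 = q - 1 := by simp [hi, h0]; omega
          rw [this, ← horder]
          have h1 : α ^ orderOf α = 1 := pow_orderOf_eq_one α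
          have h2 : α ^ k = Units.mk0 _ hy0 := hαk
          rw [h0, pow_zero] at h2
          have : (1 : F) = x * ((α : F) - 1) + 1 := by
            have := congrArg (Units.val) h2
            simpa using this
          rw [← this]
          calc ((α : F)) ^ orderOf α = ((α ^ orderOf α : Fˣ) : F) := by push_cast; ring
            _ = 1 := by rw [h1]; rfl
        · have : i + 1 = k := by simp [hi, Nat.pos_iff_ne_zero.mp h0]; omega
          rw [this]
          have := congrArg (Units.val) hαk
          push_cast at this
          simpa using this
      apply h i hilt
      rw [hv, hαi]
      field_simp
      ring
    · intro hx i hilt hvi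
      rw [hv, hx] at hvi
      field_simp at hvi
      have h0 : (α : F) ^ (i + 1) = 0 := by linear_combination hvi
      exact pow_ne_zero _ (Units.ne_zero α) h0
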